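/- Let n ≥ 1 be an integer and R > 1 real. Define E_n : ℂ → ℂ by E_n(z) = ((−1)^{n+1}·n!/(3n)^n)·(1/(2πi))·∮_{|w|=R} e^{3nzw}/(w(w² − 1))^{n+1} dw, the integral being over the positively oriented circle of radius R centered at 0. Then E_n(z)/z^{3n+2} tends to (−1)^{n+1}·n!·(3n)^{2n+2}/(3n+2)! as z → 0 with z ≠ 0. -/

import Mathlib

open Filter Complex Metric Finset

private lemma circleInt_sum {ι : Type*} (s : Finset ι) (f : ι → ℂ → ℂ) (c : ℂ) (R : ℝ)
    (h : ∀ i ∈ s, CircleIntegrable (f i) c R) :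
    (∮ z in C(c, R), ∑ i ∈ s, f i z) = ∑ i ∈ s, ∮ z in C(c, R), f i z := by
  unfold circleIntegral
  rw [← intervalIntegral.integral_finset_sum (fun i hi => (h i hi).out)]
  simp [Finset.mul_sum]

private lemma vanish {f : ℂ → ℂ} {M : ℝ}
    (hd : ∀ w : ℂ, 1 < ‖w‖ → DifferentiableAt ℂ f w)
    (hb : ∀ w : ℂ, 2 ≤ ‖w‖ → ‖f w‖ ≤ M / ‖w‖ ^ 2)
    {R : ℝ} (hR : 1 < R) : (∮ w in C(0, R), f w) = 0 := by
  have h0R : 0 < R := by linarith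
  have key : ∀ r : ℝ, R ≤ r → (∮ w in C(0, R), f w) = ∮ w in C(0, r), f w := by
    intro r hr
    refine (circleIntegral_eq_of_differentiable_on_annulus_off_countable h0R hr
      Set.countable_empty ?_ ?_).symm
    · intro z hz
      have : 1 < ‖z‖ := by
        have := hz.2
        simp [mem_ball, Complex.dist_eq] at this
        simpa using lt_of_lt_of_le hR this
      exact ((hd z this).continuousAt).continuousWithinAt
    · intro z hz
      have : 1 < ‖z‖ := by
        have := hz.1.2
        simp [mem_closedBall, Complex.dist_eq] at this
        simpa using lt_of_lt_of_le hR (le_of_lt this)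
      exact hd z this
  have bound : ∀ r : ℝ, max R 2 ≤ r → ‖∮ w in C(0, R), f w‖ ≤ 2 * Real.pi * M / r := by
    intro r hr
    have hr2 : (2:ℝ) ≤ r := le_trans (le_max_right _ _) hr
    have hrR : R ≤ r := le_trans (le_max_left _ _) hr
    have hrpos : 0 < r := by linarith
    rw [key r hrR]
    have := circleIntegral.norm_integral_le_of_norm_le_const (f := f) (c := 0) (R := r)
      (C := M / r ^ 2) hrpos.le ?_
    · calc ‖∮ w in C(0, r), f w‖ ≤ 2 * Real.pi * r * (M / r ^ 2) := this
        _ = 2 * Real.pi * M / r := by field_simp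
    · intro z hz
      have hz' : ‖z‖ = r := by simpa [Complex.dist_eq] using hz
      rw [← hz']
      exact hb z (by rw [hz']; exact hr2)
  have htend : Tendsto (fun r : ℝ => 2 * Real.pi * M / r) atTop (nhds 0) :=
    tendsto_const_nhds.div_atTop tendsto_id
  have : ‖∮ w in C(0, R), f w‖ ≤ 0 :=
    ge_of_tendsto htend (eventually_atTop.2 ⟨max R 2, bound⟩)
  simpa using le_antisymm this (norm_nonneg _)

private lemma den_ne {w : ℂ} (hw : 1 < ‖w‖) : w * (w ^ 2 - 1) ≠ 0 := by
  apply mul_ne_zero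
  · intro h; rw [h] at hw; simp at hw; linarith
  · intro h
    have h2 : w ^ 2 = 1 := by linear_combination h
    have : ‖w‖ ^ 2 = 1 := by rw [← norm_pow, h2, norm_one]
    nlinarith

private lemma diffA (n k : ℕ) {w : ℂ} (hw : 1 < ‖w‖) :
    DifferentiableAt ℂ (fun w : ℂ => w ^ k / (w * (w ^ 2 - 1)) ^ (n + 1)) w :=
  DifferentiableAt.div (by fun_prop) (by fun_prop) (pow_ne_zero _ (den_ne hw))

private lemma hlow {w : ℂ} (hw : 2 ≤ ‖w‖) : 3 / 4 * ‖w‖ ^ 2 ≤ ‖w ^ 2 - 1‖ := by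
  have h1 : ‖w‖ ^ 2 - ‖(1:ℂ)‖ ≤ ‖w ^ 2 - 1‖ := by
    rw [← norm_pow]; exact norm_sub_norm_le _ _
  rw [norm_one] at h1
  nlinarith

private lemma hup {w : ℂ} (hw : 2 ≤ ‖w‖) : ‖w ^ 2 - 1‖ ≤ 2 * ‖w‖ ^ 2 := by
  have h1 : ‖w ^ 2 - 1‖ ≤ ‖w‖ ^ 2 + ‖(1:ℂ)‖ := by
    rw [← norm_pow]; exact norm_sub_le _ _
  rw [norm_one] at h1
  nlinarith

private lemma intA (n k : ℕ) (hk : k ≤ 3 * n + 1) {R : ℝ} (hR : 1 < R) :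
    (∮ w in C(0, R), w ^ k / (w * (w ^ 2 - 1)) ^ (n + 1)) = 0 := by
  apply vanish (M := (4 / 3 : ℝ) ^ (n + 1)) (fun w hw => diffA n k hw) _ hR
  intro w hw
  have ha0 : (0:ℝ) < ‖w‖ := by linarith
  have ha1 : (1:ℝ) ≤ ‖w‖ := by linarith
  have hl := hlow hw
  have hnorm : ‖w ^ k / (w * (w ^ 2 - 1)) ^ (n + 1)‖
      = ‖w‖ ^ k / (‖w‖ * ‖w ^ 2 - 1‖) ^ (n + 1) := by
    rw [norm_div, norm_pow, norm_pow, norm_mul]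
  rw [hnorm]
  have hden : (3 / 4 * ‖w‖ ^ 3) ^ (n + 1) ≤ (‖w‖ * ‖w ^ 2 - 1‖) ^ (n + 1) := by
    apply pow_le_pow_left₀ (by positivity)
    nlinarith
  calc ‖w‖ ^ k / (‖w‖ * ‖w ^ 2 - 1‖) ^ (n + 1)
      ≤ ‖w‖ ^ (3 * n + 1) / (3 / 4 * ‖w‖ ^ 3) ^ (n + 1) :=
        div_le_div₀ (by positivity) (pow_le_pow_right₀ ha1 hk) (by positivity) hden
    _ = (4 / 3 : ℝ) ^ (n + 1) / ‖w‖ ^ 2 := by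
        rw [mul_pow, ← pow_mul]
        rw [show 3 * (n + 1) = 3 * n + 1 + 2 by ring, pow_add]
        rw [div_eq_div_iff (by positivity) (by positivity), ← mul_assoc,
          show ((4:ℝ) / 3) ^ (n + 1) * ((3:ℝ) / 4) ^ (n + 1) = 1 by
            rw [← mul_pow]; norm_num,
          one_mul, pow_add, pow_add]

private lemma contInt (n k : ℕ) {R : ℝ} (hR : 1 < R) :
    CircleIntegrable (fun w : ℂ => w ^ k / (w * (w ^ 2 - 1)) ^ (n + 1)) 0 R := by
  apply ContinuousOn.circleIntegrable (by linarith)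
  intro z hz
  have hz1 : 1 < ‖z‖ := by
    have := mem_sphere_iff_norm.mp hz
    rw [sub_zero] at this
    rw [this]; exact hR
  exact ((diffA n k hz1).continuousAt).continuousWithinAt

private lemma invInt {R : ℝ} (hR : 1 < R) :
    CircleIntegrable (fun w : ℂ => w⁻¹) 0 R := by
  apply ContinuousOn.circleIntegrable (by linarith)
  intro z hz
  have hz1 : 1 < ‖z‖ := by
    have := mem_sphere_iff_norm.mp hz
    rw [sub_zero] at this
    rw [this]; exact hR
  have hz0 : z ≠ 0 := by intro h; rw [h] at hz1; simp at hz1; linarith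
  exact (((differentiableAt_inv_iff (𝕜 := ℂ)).mpr hz0).continuousAt).continuousWithinAt

private lemma intB (n : ℕ) {R : ℝ} (hR : 1 < R) :
    (∮ w in C(0, R), w ^ (3 * n + 2) / (w * (w ^ 2 - 1)) ^ (n + 1))
      = 2 * Real.pi * Complex.I := by
  have h0R : (0:ℝ) < R := by linarith
  have hinv : (∮ w in C(0, R), w⁻¹) = 2 * Real.pi * Complex.I := by
    have := circleIntegral.integral_sub_inv_of_mem_ball
      (show (0:ℂ) ∈ ball (0:ℂ) R by simpa using h0R)
    simpa using this
  have hzero : (∮ w in C(0, R),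
      (w ^ (3 * n + 2) / (w * (w ^ 2 - 1)) ^ (n + 1) - w⁻¹)) = 0 := by
    apply vanish (M := ((n:ℝ) + 1) * 2 ^ n * (4 / 3) ^ (n + 1)) ?_ ?_ hR
    · intro w hw
      have hw0 : w ≠ 0 := by intro h; rw [h] at hw; simp at hw; linarith
      exact (diffA n (3 * n + 2) hw).sub ((differentiableAt_inv_iff (𝕜 := ℂ)).mpr hw0)
    · intro w hw
      have hw1 : (1:ℝ) < ‖w‖ := by linarith
      have ha0 : (0:ℝ) < ‖w‖ := by linarith
      have hw0 : w ≠ 0 := by intro h; rw [h] at hw1; simp at hw1; linarith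
      have hDne : (w * (w ^ 2 - 1)) ^ (n + 1) ≠ 0 := pow_ne_zero _ (den_ne hw1)
      set S : ℂ := ∑ i ∈ range (n + 1), (w ^ 2) ^ i * (w ^ 2 - 1) ^ (n - i) with hSdef
      have hgeom : S * (w ^ 2 - (w ^ 2 - 1)) = (w ^ 2) ^ (n + 1) - (w ^ 2 - 1) ^ (n + 1) := by
        have := geom_sum₂_mul (w ^ 2) (w ^ 2 - 1) (n + 1)
        simpa [hSdef, Nat.add_sub_cancel] using this
      have e1 : w * w ^ (3 * n + 2) = (w ^ 2) ^ (n + 1) * w ^ (n + 1) := by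
        rw [← pow_succ' w (3 * n + 2), show 3 * n + 2 + 1 = 3 * (n + 1) by ring,
          pow_mul, ← mul_pow]
        ring_nf
      have hnum : w * w ^ (3 * n + 2) - (w * (w ^ 2 - 1)) ^ (n + 1) = w ^ (n + 1) * S := by
        rw [e1, mul_pow]
        linear_combination (-(w ^ (n + 1))) * hgeom
      have hid : w ^ (3 * n + 2) / (w * (w ^ 2 - 1)) ^ (n + 1) - w⁻¹
          = (w ^ (n + 1) * S) / (w * (w * (w ^ 2 - 1)) ^ (n + 1)) := by
        rw [inv_eq_one_div, div_sub_div _ _ hDne hw0, ← hnum]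
        rw [mul_comm ((w * (w ^ 2 - 1)) ^ (n + 1)) w]
        ring_nf
      rw [hid]
      have hl := hlow hw
      have hu := hup hw
      have hS : ‖S‖ ≤ ((n:ℝ) + 1) * 2 ^ n * ‖w‖ ^ (2 * n) := by
        calc ‖S‖ ≤ ∑ i ∈ range (n + 1), ‖(w ^ 2) ^ i * (w ^ 2 - 1) ^ (n - i)‖ :=
              norm_sum_le _ _
          _ ≤ ∑ _i ∈ range (n + 1), (2:ℝ) ^ n * ‖w‖ ^ (2 * n) := by
              apply Finset.sum_le_sum
              intro i hi
              have hin : i ≤ n := by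
                have := Finset.mem_range.mp hi; omega
              rw [norm_mul, norm_pow, norm_pow, norm_pow]
              calc (‖w‖ ^ 2) ^ i * ‖w ^ 2 - 1‖ ^ (n - i)
                  ≤ (‖w‖ ^ 2) ^ i * (2 * ‖w‖ ^ 2) ^ (n - i) := by
                    apply mul_le_mul_of_nonneg_left
                      (pow_le_pow_left₀ (norm_nonneg _) hu _) (by positivity)
                _ = 2 ^ (n - i) * (‖w‖ ^ 2) ^ (i + (n - i)) := by
                    rw [mul_pow, pow_add]; ring
                _ = 2 ^ (n - i) * (‖w‖ ^ 2) ^ n := by rw [show i + (n - i) = n by omega]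
                _ ≤ 2 ^ n * (‖w‖ ^ 2) ^ n := by
                    apply mul_le_mul_of_nonneg_right
                      (pow_le_pow_right₀ one_le_two (by omega)) (by positivity)
                _ = 2 ^ n * ‖w‖ ^ (2 * n) := by rw [← pow_mul]
          _ = ((n:ℝ) + 1) * 2 ^ n * ‖w‖ ^ (2 * n) := by
              rw [Finset.sum_const, Finset.card_range]
              push_cast; ring
      have hnormeq : ‖(w ^ (n + 1) * S) / (w * (w * (w ^ 2 - 1)) ^ (n + 1))‖
          = (‖w‖ ^ (n + 1) * ‖S‖) / (‖w‖ * (‖w‖ * ‖w ^ 2 - 1‖) ^ (n + 1)) := by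
        rw [norm_div, norm_mul, norm_pow, norm_mul, norm_pow, norm_mul]
      rw [hnormeq]
      have h34 : ((4:ℝ) / 3) ^ (n + 1) * ((3:ℝ) / 4) ^ (n + 1) = 1 := by
        rw [← mul_pow]; norm_num
      calc (‖w‖ ^ (n + 1) * ‖S‖) / (‖w‖ * (‖w‖ * ‖w ^ 2 - 1‖) ^ (n + 1))
          ≤ (‖w‖ ^ (n + 1) * (((n:ℝ) + 1) * 2 ^ n * ‖w‖ ^ (2 * n)))
            / (‖w‖ * (3 / 4 * ‖w‖ ^ 3) ^ (n + 1)) := by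
            apply div_le_div₀ (by positivity)
              (mul_le_mul_of_nonneg_left hS (by positivity)) (by positivity)
            apply mul_le_mul_of_nonneg_left _ ha0.le
            apply pow_le_pow_left₀ (by positivity)
            nlinarith
        _ = (((n:ℝ) + 1) * 2 ^ n * (4 / 3) ^ (n + 1)) / ‖w‖ ^ 3 := by
            rw [div_eq_div_iff (by positivity) (by positivity), mul_pow, ← pow_mul]
            set x := ((4:ℝ) / 3) ^ (n + 1) with hxdef
            set y := ((3:ℝ) / 4) ^ (n + 1) with hydef
            have hxy : x * y = 1 := by rw [hxdef, hydef, ← mul_pow]; norm_num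
            linear_combination (-(((n:ℝ) + 1) * 2 ^ n
              * (‖w‖ ^ (n + 1) * ‖w‖ ^ (2 * n) * ‖w‖ ^ 3))) * hxy
        _ ≤ (((n:ℝ) + 1) * 2 ^ n * (4 / 3) ^ (n + 1)) / ‖w‖ ^ 2 := by
            apply div_le_div_of_nonneg_left (by positivity) (by positivity)
            nlinarith
  have hsub := circleIntegral.integral_sub (contInt n (3 * n + 2) hR) (invInt hR)
  rw [hsub] at hzero
  rw [hinv] at hzero
  linear_combination hzero

private lemma circleInt_add {f g : ℂ → ℂ} {c : ℂ} {R : ℝ} (hf : CircleIntegrable f c R)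
    (hg : CircleIntegrable g c R) :
    (∮ z in C(c, R), (f z + g z)) = (∮ z in C(c, R), f z) + ∮ z in C(c, R), g z := by
  unfold circleIntegral
  rw [← intervalIntegral.integral_add hf.out hg.out]
  congr 1
  funext θ
  simp only [smul_eq_mul, deriv_circleMap]
  ring

private lemma circleInt_const_mul (a : ℂ) (f : ℂ → ℂ) (c : ℂ) (R : ℝ) :
    (∮ z in C(c, R), a * f z) = a * ∮ z in C(c, R), f z := by
  simpa [smul_eq_mul] using circleIntegral.integral_smul (𝕜 := ℂ) a f c R

private lemma circleIntegrable_of_cont {f : ℂ → ℂ} {R : ℝ} (hR : 1 < R)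
    (h : ∀ w : ℂ, 1 < ‖w‖ → ContinuousAt f w) : CircleIntegrable f 0 R := by
  apply ContinuousOn.circleIntegrable (by linarith)
  intro z hz
  have hz1 : 1 < ‖z‖ := by
    have := mem_sphere_iff_norm.mp hz
    rw [sub_zero] at this
    rw [this]; exact hR
  exact (h z hz1).continuousWithinAt

theorem remainder_leading_coefficient (n : ℕ) (hn : 1 ≤ n) (R : ℝ) (hR : 1 < R) :
    Tendsto
      (fun z : ℂ =>
        ((-1 : ℂ) ^ (n + 1) * (n.factorial : ℂ) / (3 * (n : ℂ)) ^ n *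
            (1 / (2 * Real.pi * Complex.I)) *
            ∮ w in C(0, R), Complex.exp (3 * (n : ℂ) * z * w) / (w * (w ^ 2 - 1)) ^ (n + 1)) /
          z ^ (3 * n + 2))
      (nhdsWithin 0 {(0 : ℂ)}ᶜ)
      (nhds ((-1 : ℂ) ^ (n + 1) * (n.factorial : ℂ) * (3 * (n : ℂ)) ^ (2 * n + 2) /
        ((3 * n + 2).factorial : ℂ))) := by
  have h0R : (0:ℝ) < R := by linarith
  set rem : ℂ → ℂ := fun z => ∮ w in C(0, R),
    (Complex.exp (3 * (n : ℂ) * z * w)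
      - ∑ k ∈ range (3 * n + 3), (3 * (n : ℂ) * z * w) ^ k / (k.factorial : ℂ))
      / (w * (w ^ 2 - 1)) ^ (n + 1) with hrem_def
  -- Step 1: decomposition of the integral
  have hFz : ∀ z : ℂ,
      (∮ w in C(0, R), Complex.exp (3 * (n : ℂ) * z * w) / (w * (w ^ 2 - 1)) ^ (n + 1))
        = rem z + (3 * (n : ℂ) * z) ^ (3 * n + 2) / (((3 * n + 2).factorial : ℕ) : ℂ)
            * (2 * Real.pi * Complex.I) := by
    intro z
    have hint_g : CircleIntegrable (fun w : ℂ =>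
        (Complex.exp (3 * (n : ℂ) * z * w)
          - ∑ k ∈ range (3 * n + 3), (3 * (n : ℂ) * z * w) ^ k / (k.factorial : ℂ))
          / (w * (w ^ 2 - 1)) ^ (n + 1)) 0 R := by
      apply circleIntegrable_of_cont hR
      intro w hw
      exact ContinuousAt.div (by fun_prop) (by fun_prop) (pow_ne_zero _ (den_ne hw))
    have hterm : ∀ k, CircleIntegrable (fun w : ℂ =>
        (3 * (n : ℂ) * z) ^ k / (k.factorial : ℂ)
          * (w ^ k / (w * (w ^ 2 - 1)) ^ (n + 1))) 0 R := by
      intro k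
      apply circleIntegrable_of_cont hR
      intro w hw
      exact continuousAt_const.mul ((diffA n k hw).continuousAt)
    have hint_h : CircleIntegrable (fun w : ℂ => ∑ k ∈ range (3 * n + 3),
        (3 * (n : ℂ) * z) ^ k / (k.factorial : ℂ)
          * (w ^ k / (w * (w ^ 2 - 1)) ^ (n + 1))) 0 R := by
      apply circleIntegrable_of_cont hR
      intro w hw
      exact tendsto_finset_sum _ fun k _ => continuousAt_const.mul ((diffA n k hw).continuousAt)
    have hfun : ∀ w : ℂ, Complex.exp (3 * (n : ℂ) * z * w) / (w * (w ^ 2 - 1)) ^ (n + 1)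
        = (Complex.exp (3 * (n : ℂ) * z * w)
            - ∑ k ∈ range (3 * n + 3), (3 * (n : ℂ) * z * w) ^ k / (k.factorial : ℂ))
            / (w * (w ^ 2 - 1)) ^ (n + 1)
          + ∑ k ∈ range (3 * n + 3), (3 * (n : ℂ) * z) ^ k / (k.factorial : ℂ)
              * (w ^ k / (w * (w ^ 2 - 1)) ^ (n + 1)) := by
      intro w
      have h1 : ∑ k ∈ range (3 * n + 3), (3 * (n : ℂ) * z) ^ k / (k.factorial : ℂ)
            * (w ^ k / (w * (w ^ 2 - 1)) ^ (n + 1))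
          = (∑ k ∈ range (3 * n + 3), (3 * (n : ℂ) * z * w) ^ k / (k.factorial : ℂ))
            / (w * (w ^ 2 - 1)) ^ (n + 1) := by
        rw [Finset.sum_div]
        refine Finset.sum_congr rfl fun k _ => ?_
        rw [mul_pow]
        ring
      rw [h1, ← add_div]
      congr 1
      ring
    calc (∮ w in C(0, R), Complex.exp (3 * (n : ℂ) * z * w) / (w * (w ^ 2 - 1)) ^ (n + 1))
        = ∮ w in C(0, R),
            ((Complex.exp (3 * (n : ℂ) * z * w)
              - ∑ k ∈ range (3 * n + 3), (3 * (n : ℂ) * z * w) ^ k / (k.factorial : ℂ))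
              / (w * (w ^ 2 - 1)) ^ (n + 1)
            + ∑ k ∈ range (3 * n + 3), (3 * (n : ℂ) * z) ^ k / (k.factorial : ℂ)
                * (w ^ k / (w * (w ^ 2 - 1)) ^ (n + 1))) := by
          simp only [hfun]
      _ = rem z + ∮ w in C(0, R), ∑ k ∈ range (3 * n + 3),
            (3 * (n : ℂ) * z) ^ k / (k.factorial : ℂ)
              * (w ^ k / (w * (w ^ 2 - 1)) ^ (n + 1)) := by
          rw [circleInt_add hint_g hint_h]
      _ = rem z + (3 * (n : ℂ) * z) ^ (3 * n + 2) / (((3 * n + 2).factorial : ℕ) : ℂ)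
            * (2 * Real.pi * Complex.I) := by
          congr 1
          rw [circleInt_sum _ _ _ _ (fun k _ => hterm k)]
          rw [Finset.sum_eq_single (3 * n + 2)]
          · rw [circleInt_const_mul, intB n hR]
          · intro k hk hne
            rw [circleInt_const_mul, intA n k (by have := Finset.mem_range.mp hk; omega) hR,
              mul_zero]
          · intro h; exact absurd (Finset.mem_range.mpr (by omega)) h
  -- Step 2: constants and positivity
  have hn1 : (1:ℝ) ≤ (n:ℝ) := by exact_mod_cast hn
  have h3nR : (0:ℝ) < 3 * n * R := by nlinarith
  have hc30 : (3 * (n : ℂ)) ≠ 0 := by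
    have : (n:ℂ) ≠ 0 := Nat.cast_ne_zero.mpr (by omega)
    simp [this]
  have hπ : (2 * (Real.pi:ℂ) * Complex.I) ≠ 0 := by
    simp [Real.pi_ne_zero, Complex.I_ne_zero, Complex.ofReal_ne_zero]
  set L : ℂ := (-1 : ℂ) ^ (n + 1) * (n.factorial : ℂ) * (3 * (n : ℂ)) ^ (2 * n + 2) /
    ((3 * n + 2).factorial : ℂ) with hLdef
  set K0 : ℂ := (-1 : ℂ) ^ (n + 1) * (n.factorial : ℂ) / (3 * (n : ℂ)) ^ n *
    (1 / (2 * Real.pi * Complex.I)) with hK0def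
  -- eventual equality
  have heq : ∀ z : ℂ, z ≠ 0 →
      ((-1 : ℂ) ^ (n + 1) * (n.factorial : ℂ) / (3 * (n : ℂ)) ^ n *
          (1 / (2 * Real.pi * Complex.I)) *
          ∮ w in C(0, R), Complex.exp (3 * (n : ℂ) * z * w) / (w * (w ^ 2 - 1)) ^ (n + 1)) /
        z ^ (3 * n + 2) = L + K0 * (rem z / z ^ (3 * n + 2)) := by
    intro z hz
    have hzp : z ^ (3 * n + 2) ≠ 0 := pow_ne_zero _ hz
    have hcn : (3 * (n : ℂ)) ^ n ≠ 0 := pow_ne_zero _ hc30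
    have hfact : (((3 * n + 2).factorial : ℕ) : ℂ) ≠ 0 :=
      Nat.cast_ne_zero.mpr (Nat.factorial_ne_zero _)
    have hpow : (3 * (n : ℂ) * z) ^ (3 * n + 2)
        = (3 * (n : ℂ)) ^ n * ((3 * (n : ℂ)) ^ (2 * n + 2) * z ^ (3 * n + 2)) := by
      rw [mul_pow, show 3 * n + 2 = n + (2 * n + 2) by ring, pow_add]
      ring
    rw [hFz z, hpow, hLdef, hK0def]
    field_simp
    ring
  -- Step 3: the remainder term tends to zero
  set δ : ℝ := min 1 (1 / (3 * n * R)) with hδdef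
  set d : ℝ := (R * (R ^ 2 - 1)) ^ (n + 1) with hddef
  set Ebd : ℝ := (((3 * n + 3).succ : ℕ) : ℝ)
    * ((((3 * n + 3).factorial : ℕ) : ℝ) * (((3 * n + 3 : ℕ)) : ℝ))⁻¹ with hEdef
  set K : ℝ := 2 * Real.pi * R * ((3 * n * R) ^ (3 * n + 3) * Ebd / d) with hKdef
  clear_value K Ebd d δ
  have hδpos : 0 < δ := by rw [hδdef]; exact lt_min one_pos (by positivity)
  have hd : 0 < d := by rw [hddef]; exact pow_pos (by nlinarith) _
  have hE : 0 ≤ Ebd := by rw [hEdef]; positivity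
  have hbound : ∀ z : ℂ, z ≠ 0 → ‖z‖ < δ → ‖rem z / z ^ (3 * n + 2)‖ ≤ K * ‖z‖ := by
    intro z hz0 hzδ
    have hz0' : ‖z‖ ≠ 0 := norm_ne_zero_iff.mpr hz0
    have hzn : 0 ≤ ‖z‖ := norm_nonneg _
    have hrem : ‖rem z‖ ≤ 2 * Real.pi * R
        * ((3 * n * R) ^ (3 * n + 3) * Ebd / d * ‖z‖ ^ (3 * n + 3)) := by
      apply circleIntegral.norm_integral_le_of_norm_le_const h0R.le
      intro w hw
      have hwR : ‖w‖ = R := by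
        have := mem_sphere_iff_norm.mp hw
        rwa [sub_zero] at this
      have hx : ‖3 * (n : ℂ) * z * w‖ = 3 * n * R * ‖z‖ := by
        rw [norm_mul, norm_mul, norm_mul, hwR]
        simp [Complex.norm_natCast]
        ring
      have hx1 : ‖3 * (n : ℂ) * z * w‖ ≤ 1 := by
        rw [hx]
        have hδ2 : δ ≤ 1 / (3 * n * R) := by rw [hδdef]; exact min_le_right _ _
        have : ‖z‖ ≤ 1 / (3 * n * R) := le_trans hzδ.le hδ2
        calc 3 * n * R * ‖z‖ ≤ 3 * n * R * (1 / (3 * n * R)) := by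
              apply mul_le_mul_of_nonneg_left this h3nR.le
          _ = 1 := by
              rw [mul_one_div, div_self h3nR.ne']
      have hexp := Complex.exp_bound hx1 (show 0 < 3 * n + 3 by omega)
      rw [norm_div]
      have hnum : ‖Complex.exp (3 * (n : ℂ) * z * w)
          - ∑ k ∈ range (3 * n + 3), (3 * (n : ℂ) * z * w) ^ k / (k.factorial : ℂ)‖
          ≤ (3 * n * R * ‖z‖) ^ (3 * n + 3) * Ebd := by
        refine le_trans hexp (le_of_eq ?_)
        rw [hx, hEdef]
      have hden : d ≤ ‖(w * (w ^ 2 - 1)) ^ (n + 1)‖ := by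
        rw [norm_pow, norm_mul, hddef]
        apply pow_le_pow_left₀ (by nlinarith)
        have h1 : R ^ 2 - 1 ≤ ‖w ^ 2 - 1‖ := by
          have := norm_sub_norm_le (w ^ 2) (1 : ℂ)
          rw [norm_pow, hwR, norm_one] at this
          linarith
        rw [hwR]
        nlinarith
      calc ‖Complex.exp (3 * (n : ℂ) * z * w)
            - ∑ k ∈ range (3 * n + 3), (3 * (n : ℂ) * z * w) ^ k / (k.factorial : ℂ)‖
            / ‖(w * (w ^ 2 - 1)) ^ (n + 1)‖
          ≤ ((3 * n * R * ‖z‖) ^ (3 * n + 3) * Ebd) / d :=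
            div_le_div₀ (by positivity) hnum hd hden
        _ = (3 * n * R) ^ (3 * n + 3) * Ebd / d * ‖z‖ ^ (3 * n + 3) := by
            rw [mul_pow]
            ring
    calc ‖rem z / z ^ (3 * n + 2)‖ = ‖rem z‖ / ‖z‖ ^ (3 * n + 2) := by
          rw [norm_div, norm_pow]
      _ ≤ (2 * Real.pi * R * ((3 * n * R) ^ (3 * n + 3) * Ebd / d * ‖z‖ ^ (3 * n + 3)))
            / ‖z‖ ^ (3 * n + 2) := by gcongr
      _ = K * ‖z‖ := by
          rw [hKdef, show 3 * n + 3 = 3 * n + 2 + 1 by omega, pow_succ]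
          have hgen : ∀ A B : ℝ, A * (B * (‖z‖ ^ (3 * n + 2) * ‖z‖)) / ‖z‖ ^ (3 * n + 2)
              = A * B * ‖z‖ := by
            intro A B
            calc A * (B * (‖z‖ ^ (3 * n + 2) * ‖z‖)) / ‖z‖ ^ (3 * n + 2)
                = A * B * ‖z‖ * ‖z‖ ^ (3 * n + 2) / ‖z‖ ^ (3 * n + 2) := by ring
              _ = A * B * ‖z‖ := mul_div_cancel_right₀ _ (pow_ne_zero _ hz0')
          exact hgen (2 * Real.pi * R) ((3 * (n:ℝ) * R) ^ (3 * n + 3) * Ebd / d)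
  have hev : ∀ᶠ z : ℂ in nhdsWithin 0 {(0:ℂ)}ᶜ, ‖rem z / z ^ (3 * n + 2)‖ ≤ K * ‖z‖ := by
    have h1 : Metric.ball (0:ℂ) δ ∈ nhds (0:ℂ) := Metric.ball_mem_nhds _ hδpos
    filter_upwards [mem_nhdsWithin_of_mem_nhds h1, self_mem_nhdsWithin] with z hz1 hz2
    exact hbound z hz2 (mem_ball_zero_iff.mp hz1)
  have htendK : Tendsto (fun z : ℂ => K * ‖z‖) (nhdsWithin 0 {(0:ℂ)}ᶜ) (nhds 0) := by
    have h2 : Tendsto (fun z : ℂ => K * ‖z‖) (nhds 0) (nhds (K * ‖(0:ℂ)‖)) :=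
      (continuous_const.mul continuous_norm).tendsto 0
    simpa using h2.mono_left nhdsWithin_le_nhds
  have h0 : Tendsto (fun z : ℂ => rem z / z ^ (3 * n + 2)) (nhdsWithin 0 {(0:ℂ)}ᶜ) (nhds 0) :=
    squeeze_zero_norm' hev htendK
  have hG : Tendsto (fun z : ℂ => L + K0 * (rem z / z ^ (3 * n + 2)))
      (nhdsWithin 0 {(0:ℂ)}ᶜ) (nhds L) := by
    simpa using tendsto_const_nhds.add ((h0.const_mul K0))
  apply hG.congr'
  filter_upwards [self_mem_nhdsWithin] with z hz
  exact (heq z hz).symm
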